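/- Let h, g, P, Q be positive reals and t₁ = [(h²P + g²Q + 1) − √((h²P + g²Q + 1)² − 4h²g²PQ)]/(2hg√P). Then 0 < t₁ ≤ √Q, so the globally optimal cancelation amplitude never exceeds the square root of the spoofing power budget. -/
import Mathlib


theorem stmt7 (h g P Q : ℝ) (hh : 0 < h) (hg : 0 < g) (hP : 0 < P) (hQ : 0 < Q)
    (t₁ : ℝ)
    (ht₁ : t₁ = ((h ^ 2 * P + g ^ 2 * Q + 1) -
        Real.sqrt ((h ^ 2 * P + g ^ 2 * Q + 1) ^ 2 - 4 * h ^ 2 * g ^ 2 * P * Q)) /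
        (2 * h * g * Real.sqrt P)) :
    0 < t₁ ∧ t₁ ≤ Real.sqrt Q := by
  have hsP : 0 < Real.sqrt P := Real.sqrt_pos.mpr hP
  have hsQ : 0 < Real.sqrt Q := Real.sqrt_pos.mpr hQ
  have hP2 : Real.sqrt P ^ 2 = P := Real.sq_sqrt hP.le
  have hQ2 : Real.sqrt Q ^ 2 = Q := Real.sq_sqrt hQ.le
  set c := h * Real.sqrt P with hc_def
  set d := g * Real.sqrt Q with hd_def
  have hc : 0 < c := mul_pos hh hsP
  have hd : 0 < d := mul_pos hg hsQ
  have hc2 : c ^ 2 = h ^ 2 * P := by rw [hc_def, mul_pow, hP2]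
  have hd2 : d ^ 2 = g ^ 2 * Q := by rw [hd_def, mul_pow, hQ2]
  set S := h ^ 2 * P + g ^ 2 * Q + 1 with hS_def
  have hSe : S = c ^ 2 + d ^ 2 + 1 := by rw [hS_def, hc2, hd2]
  set E := S ^ 2 - 4 * h ^ 2 * g ^ 2 * P * Q with hE_def
  clear_value c d S E
  have hEe : E = S ^ 2 - (2 * c * d) ^ 2 := by
    rw [hE_def]; linear_combination 4 * d ^ 2 * hc2 + 4 * h ^ 2 * P * hd2
  have hcdS : 2 * c * d + 1 ≤ S := by rw [hSe]; nlinarith [sq_nonneg (c - d)]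
  have hcd : 0 < c * d := mul_pos hc hd
  have hS1 : 0 < S - 2 * c * d := by linarith
  have hSpos : 0 < S := by linarith
  have hE0 : 0 ≤ E := by nlinarith [mul_pos hS1 (by linarith : (0:ℝ) < S + 2 * c * d)]
  have hEsq : Real.sqrt E ^ 2 = E := Real.sq_sqrt hE0
  have hEnn : 0 ≤ Real.sqrt E := Real.sqrt_nonneg E
  have hElt : Real.sqrt E < S := by
    rw [Real.sqrt_lt' hSpos]; nlinarith
  have hEge : S - 2 * c * d ≤ Real.sqrt E := by
    rw [show S - 2 * c * d = Real.sqrt ((S - 2 * c * d) ^ 2) from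
      (Real.sqrt_sq hS1.le).symm]
    apply Real.sqrt_le_sqrt
    nlinarith [mul_pos hcd hS1]
  have hden : 0 < 2 * h * g * Real.sqrt P := by positivity
  have ht₁' : t₁ = (S - Real.sqrt E) / (2 * h * g * Real.sqrt P) := ht₁
  constructor
  · rw [ht₁']
    exact div_pos (by linarith) hden
  · rw [ht₁', div_le_iff₀ hden]
    have : Real.sqrt Q * (2 * h * g * Real.sqrt P) = 2 * c * d := by
      rw [hc_def, hd_def]; ring
    rw [this]
    linarith
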